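/- Let X be a separable F-space and T a continuous linear operator on X. Suppose there exists a dense subset X₀ of X and for each x ∈ X₀ a sequence (u_n(x))_{n≥0} in X with u_0(x) = x such that (1) ∑_{n≥1} T^n x converges unconditionally, (2) ∑_{n≥1} u_n(x) converges unconditionally, and (3) T^j u_n(x) = u_{n-j}(x) for all j ≤ n. Then T is hypercyclic (has a vector with dense orbit). -/

import Mathlib

open Filter Topology Uniformity

/-- Modified Frequent Hypercyclicity Criterion (weak conclusion): if `T` is a continuous
linear operator on a separable F-space `X` and there are a dense set `X₀ ⊆ X` and, for each
`x ∈ X₀`, a sequence `(u_n(x))` with `u_0(x) = x`, such that `∑_{n≥1} Tⁿx` and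
`∑_{n≥1} u_n(x)` converge unconditionally and `T^j u_n(x) = u_{n-j}(x)` for `j ≤ n`,
then `T` is hypercyclic. -/
theorem stmt_19 (X : Type*) [AddCommGroup X] [Module ℂ X] [UniformSpace X]
    [IsUniformAddGroup X] [ContinuousSMul ℂ X] [CompleteSpace X]
    [TopologicalSpace.MetrizableSpace X] [TopologicalSpace.SeparableSpace X]
    (T : X →L[ℂ] X) (X₀ : Set X) (hX₀ : Dense X₀) (u : X → ℕ → X)
    (hu0 : ∀ x ∈ X₀, u x 0 = x)
    (hT : ∀ x ∈ X₀, Summable fun n : ℕ => (T ^ (n + 1)) x)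
    (hu : ∀ x ∈ X₀, Summable fun n : ℕ => u x (n + 1))
    (huT : ∀ x ∈ X₀, ∀ j n : ℕ, j ≤ n → (T ^ j) (u x n) = u x (n - j)) :
    ∃ x : X, Dense (Set.range fun n : ℕ => (T ^ n) x) := by
  haveI : (𝓤 X).IsCountablyGenerated := by
    rw [uniformity_eq_comap_nhds_zero X]
    infer_instance
  haveI : SecondCountableTopology X := UniformSpace.secondCountable_of_separable X
  haveI : BaireSpace X := inferInstance
  -- topological transitivity
  have trans : ∀ U V : Set X, IsOpen U → IsOpen V → U.Nonempty → V.Nonempty →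
      ∃ n : ℕ, ∃ w : X, w ∈ U ∧ (T ^ n) w ∈ V := by
    intro U V hUo hVo hUne hVne
    obtain ⟨y, hyU, hyX₀⟩ := hX₀.inter_open_nonempty U hUo hUne
    obtain ⟨z, hzV, hzX₀⟩ := hX₀.inter_open_nonempty V hVo hVne
    have h1 : Tendsto (fun n : ℕ => (T ^ (n + 1)) y) atTop (𝓝 0) :=
      (hT y hyX₀).tendsto_atTop_zero
    have h2 : Tendsto (fun n : ℕ => u z (n + 1)) atTop (𝓝 0) :=
      (hu z hzX₀).tendsto_atTop_zero
    -- w n = y + u z (n+1); w n → y and T^(n+1) (w n) → z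
    have hw : Tendsto (fun n : ℕ => y + u z (n + 1)) atTop (𝓝 y) := by
      simpa using (tendsto_const_nhds.add h2)
    have hTw : Tendsto (fun n : ℕ => (T ^ (n + 1)) (y + u z (n + 1))) atTop (𝓝 z) := by
      have heq : ∀ n : ℕ, (T ^ (n + 1)) (y + u z (n + 1)) = (T ^ (n + 1)) y + z := by
        intro n
        rw [map_add, huT z hzX₀ (n + 1) (n + 1) le_rfl]
        simp [hu0 z hzX₀]
      simp only [heq]
      simpa using h1.add (tendsto_const_nhds : Tendsto (fun _ : ℕ => z) atTop (𝓝 z))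
    have hwU : ∀ᶠ n in atTop, y + u z (n + 1) ∈ U := hw.eventually (hUo.mem_nhds hyU)
    have hTwV : ∀ᶠ n in atTop, (T ^ (n + 1)) (y + u z (n + 1)) ∈ V :=
      hTw.eventually (hVo.mem_nhds hzV)
    obtain ⟨n, hn1, hn2⟩ := (hwU.and hTwV).exists
    exact ⟨n + 1, y + u z (n + 1), hn1, hn2⟩
  -- Baire category argument
  obtain ⟨B, hBc, hBne, hBbasis⟩ := TopologicalSpace.exists_countable_basis X
  have hGopen : ∀ V ∈ B, IsOpen (⋃ n : ℕ, (fun x => (T ^ n) x) ⁻¹' V) := by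
    intro V hV
    exact isOpen_iUnion fun n =>
      (hBbasis.isOpen hV).preimage (T ^ n).continuous
  have hGdense : ∀ V ∈ B, Dense (⋃ n : ℕ, (fun x => (T ^ n) x) ⁻¹' V) := by
    intro V hV
    rw [dense_iff_inter_open]
    intro U hUo hUne
    obtain ⟨n, w, hwU, hwV⟩ := trans U V hUo (hBbasis.isOpen hV)
      hUne (Set.nonempty_iff_ne_empty.2 fun h => hBne (h ▸ hV))
    exact ⟨w, hwU, Set.mem_iUnion.2 ⟨n, hwV⟩⟩
  have hd : Dense (⋂ V : B, ⋃ n : ℕ, (fun x => (T ^ n) x) ⁻¹' (V : Set X)) := by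
    haveI := hBc.to_subtype
    exact dense_iInter_of_isOpen (fun V => hGopen V V.2) (fun V => hGdense V V.2)
  obtain ⟨x, hx⟩ := hd.nonempty
  refine ⟨x, dense_iff_inter_open.2 fun U hUo hUne => ?_⟩
  obtain ⟨y, hyU⟩ := hUne
  obtain ⟨V, hVB, hyV, hVU⟩ := hBbasis.exists_subset_of_mem_open hyU hUo
  have := Set.mem_iInter.1 hx ⟨V, hVB⟩
  obtain ⟨n, hn⟩ := Set.mem_iUnion.1 this
  exact ⟨(T ^ n) x, hVU hn, Set.mem_range_self n⟩
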